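/- arXiv:2205.03175 — 2 statements merged into one kernel-verified Lean document; each statement's English description precedes it below -/
import Mathlib

section
/- Let 0 < δ ≤ 1/6, 0 < ε ≤ 1/3, δ(ln(1/δ²))² ≤ ε, and set A = (3√15/20) δ^{3/2} and β = 2√3 (∫_0^1 |ψ'(z) - λ(z)|² dz)^{1/2}, where ψ' - λ equals 0 on (0,δ), -A(1/z + 1/(1-z)) on (δ, 1-ε), and -(A/ε) ln((1-ε)(1-δ)/(εδ)) on (1-ε, 1). Then (9/(2√5)) δ ≤ β ≤ (9/2) δ. -/
open MeasureTheory Real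

lemma myIntCongr {a b : ℝ} (hab : a ≤ b) {f g : ℝ → ℝ}
    (h : ∀ x ∈ Set.Ioc a b, f x = g x) :
    ∫ x in a..b, f x = ∫ x in a..b, g x := by
  rw [intervalIntegral.integral_of_le hab, intervalIntegral.integral_of_le hab]
  exact setIntegral_congr_fun measurableSet_Ioc h

lemma myIntInt {a b : ℝ} (hab : a ≤ b) {f g : ℝ → ℝ}
    (h : ∀ x ∈ Set.Ioc a b, f x = g x) (hg : IntervalIntegrable g volume a b) :
    IntervalIntegrable f volume a b := by
  rw [intervalIntegrable_iff_integrableOn_Ioc_of_le hab] at *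
  exact hg.congr_fun (fun x hx => (h x hx).symm) measurableSet_Ioc

set_option maxHeartbeats 1000000 in
theorem stmt2 (δ ε A β : ℝ) (φ : ℝ → ℝ)
    (hδ0 : 0 < δ) (hδ : δ ≤ 1/6) (hε0 : 0 < ε) (hε : ε ≤ 1/3)
    (hδε : δ * (Real.log (1/δ^2))^2 ≤ ε)
    (hA : A = (3 * Real.sqrt 15 / 20) * δ ^ ((3:ℝ)/2))
    (hφ : ∀ z, φ z = if z ≤ δ then 0
          else if z ≤ 1 - ε then -A * (1/z + 1/(1-z))
          else -(A/ε) * Real.log ((1-ε)*(1-δ)/(ε*δ)))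
    (hβ : β = 2 * Real.sqrt 3 * (∫ z in (0:ℝ)..1, |φ z|^2) ^ ((1:ℝ)/2)) :
    (9 / (2 * Real.sqrt 5)) * δ ≤ β ∧ β ≤ (9/2) * δ := by
  set L := Real.log ((1-ε)*(1-δ)/(ε*δ)) with hLdef
  set M := Real.log (1/δ^2) with hMdef
  have hδ1 : δ < 1 := by linarith
  have hε1 : ε < 1 := by linarith
  have h1ε : (0:ℝ) < 1 - ε := by linarith
  have h1δ : (0:ℝ) < 1 - δ := by linarith
  have hδ1ε : δ ≤ 1 - ε := by linarith
  have h1ε1 : (1:ℝ) - ε ≤ 1 := by linarith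
  have hεδpos : 0 < ε * δ := mul_pos hε0 hδ0
  -- log facts
  have hM2 : M = 2 * Real.log (1/δ) := by
    rw [hMdef, one_div, one_div, Real.log_inv, Real.log_inv, Real.log_pow]
    push_cast; ring
  have hm1 : 1 ≤ Real.log (1/δ) := by
    rw [Real.le_log_iff_exp_le (by positivity)]
    have h1 := Real.exp_one_lt_d9
    have h2 : (6:ℝ) ≤ 1/δ := by rw [le_div_iff₀ hδ0]; linarith
    linarith
  have hMge2 : 2 ≤ M := by rw [hM2]; linarith
  have hε4δ : 4 * δ ≤ ε := by
    have h : 0 ≤ δ * ((M - 2) * (M + 2)) :=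
      mul_nonneg hδ0.le (mul_nonneg (by linarith) (by linarith))
    nlinarith [hδε, h]
  -- δ * log(1/δ) ≤ 1/2
  have hs0 : 0 < Real.sqrt δ := Real.sqrt_pos.2 hδ0
  have hs4 : Real.sqrt δ * Real.sqrt δ = δ := Real.mul_self_sqrt hδ0.le
  have hδlog : δ * Real.log (1/δ) ≤ 1/2 := by
    have h1 : Real.log (1/δ) = 2 * Real.log (Real.sqrt (1/δ)) := by
      rw [Real.log_sqrt (by positivity)]; ring
    have h2 : Real.log (Real.sqrt (1/δ)) ≤ Real.sqrt (1/δ) - 1 :=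
      Real.log_le_sub_one_of_pos (Real.sqrt_pos.2 (by positivity))
    have h3 : Real.sqrt (1/δ) = 1 / Real.sqrt δ := by
      rw [one_div, Real.sqrt_inv, one_div]
    have h4 : δ * (1 / Real.sqrt δ) = Real.sqrt δ := by
      rw [mul_one_div, div_eq_iff hs0.ne']; exact hs4.symm
    have h5 : δ * Real.log (Real.sqrt (1/δ)) ≤ δ * (Real.sqrt (1/δ) - 1) :=
      mul_le_mul_of_nonneg_left h2 hδ0.le
    have h6 : δ * (Real.sqrt (1/δ) - 1) = Real.sqrt δ - δ := by
      rw [h3, mul_sub, h4, mul_one]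
    nlinarith [sq_nonneg (Real.sqrt δ - 1/2), hs4]
  have hM1δ : M ≤ 1/δ := by
    rw [le_div_iff₀ hδ0, hM2]; nlinarith
  -- L facts
  have hargpos : 0 < (1-ε)*(1-δ)/(ε*δ) := by positivity
  have hL0 : 0 ≤ L := by
    rw [hLdef]
    apply Real.log_nonneg
    rw [le_div_iff₀ hεδpos]; nlinarith
  have hLM : L ≤ M := by
    rw [hLdef, hMdef]
    apply Real.log_le_log hargpos
    rw [div_le_div_iff₀ hεδpos (by positivity)]
    have ha : (1-ε)*(1-δ) ≤ 1 := by nlinarith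
    have h1 := mul_le_mul_of_nonneg_right ha (sq_nonneg δ)
    have h2 : δ^2 ≤ ε*δ := by nlinarith [mul_nonneg (by linarith : (0:ℝ) ≤ ε - δ) hδ0.le]
    nlinarith [h1, h2]
  clear_value M
  have hLsum : L = Real.log (1-ε) + Real.log (1-δ) - (Real.log ε + Real.log δ) := by
    rw [hLdef, Real.log_div (by positivity) hεδpos.ne', Real.log_mul h1ε.ne' h1δ.ne',
      Real.log_mul hε0.ne' hδ0.ne']
  -- the integral
  clear_value L
  set T := 1/δ - 1/(1-δ) + 1/ε - 1/(1-ε) + 2*L + L^2/ε with hTdef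
  clear_value T
  have hF1 : ∫ z in (0:ℝ)..δ, |φ z|^2 = 0 := by
    rw [myIntCongr hδ0.le (g := fun _ => (0:ℝ))]
    · simp
    · intro x hx
      rw [hφ x, if_pos hx.2]
      simp
  have hcont2 : ContinuousOn (fun z => (A*(1/z + 1/(1-z)))^2) (Set.uIcc δ (1-ε)) := by
    rw [Set.uIcc_of_le hδ1ε]
    apply ContinuousOn.pow
    apply ContinuousOn.mul continuousOn_const
    apply ContinuousOn.add
    · refine ContinuousOn.div continuousOn_const continuousOn_id (fun x hx => ?_)
      rw [Set.mem_Icc] at hx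
      have : 0 < x := lt_of_lt_of_le hδ0 hx.1
      exact this.ne'
    · refine ContinuousOn.div continuousOn_const
        (continuousOn_const.sub continuousOn_id) (fun x hx => ?_)
      rw [Set.mem_Icc] at hx
      have : (0:ℝ) < 1 - x := by linarith [hx.2]
      exact this.ne'
  have hint2 : IntervalIntegrable (fun z => (A*(1/z + 1/(1-z)))^2) volume δ (1-ε) :=
    hcont2.intervalIntegrable
  have hderiv : ∀ z ∈ Set.uIcc δ (1-ε),
      HasDerivAt (fun y => A^2 * (-y⁻¹ + (1-y)⁻¹ + 2*(Real.log y - Real.log (1-y))))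
        ((A*(1/z + 1/(1-z)))^2) z := by
    intro z hz
    rw [Set.uIcc_of_le hδ1ε, Set.mem_Icc] at hz
    have hz0' : 0 < z := lt_of_lt_of_le hδ0 hz.1
    have hz0 : z ≠ 0 := hz0'.ne'
    have h1z' : (0:ℝ) < 1 - z := by have := hz.2; linarith
    have h1z : (1:ℝ) - z ≠ 0 := h1z'.ne'
    have hid : HasDerivAt (fun y : ℝ => 1 - y) (-1) z := by
      simpa using (hasDerivAt_id z).const_sub 1
    have d1 : HasDerivAt (fun y : ℝ => -y⁻¹) (-(-(z ^ 2)⁻¹)) z := (hasDerivAt_inv hz0).neg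
    have d2 : HasDerivAt (fun y : ℝ => (1-y)⁻¹) (-((1-z) ^ 2)⁻¹ * (-1)) z := by
      simpa [Function.comp_def] using (hasDerivAt_inv h1z).comp z hid
    have d3 : HasDerivAt Real.log z⁻¹ z := Real.hasDerivAt_log hz0
    have d4 : HasDerivAt (fun y : ℝ => Real.log (1-y)) ((1-z)⁻¹ * (-1)) z := by
      simpa [Function.comp_def] using (Real.hasDerivAt_log h1z).comp z hid
    have D := (((d1.add d2).add ((d3.sub d4).const_mul 2)).const_mul (A^2))
    refine D.congr_deriv ?_
    field_simp
    ring
  have hF2 : ∫ z in δ..(1-ε), |φ z|^2 =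
      A^2 * (-(1-ε)⁻¹ + (1-(1-ε))⁻¹ + 2*(Real.log (1-ε) - Real.log (1-(1-ε))))
      - A^2 * (-δ⁻¹ + (1-δ)⁻¹ + 2*(Real.log δ - Real.log (1-δ))) := by
    rw [myIntCongr hδ1ε (g := fun z => (A*(1/z + 1/(1-z)))^2)]
    · exact intervalIntegral.integral_eq_sub_of_hasDerivAt hderiv hint2
    · intro x hx
      rw [hφ x, if_neg (not_le.2 hx.1), if_pos hx.2, sq_abs]
      ring
  have hF3 : ∫ z in (1-ε)..1, |φ z|^2 = ε * ((A/ε)*L)^2 := by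
    rw [myIntCongr h1ε1 (g := fun _ => ((A/ε)*L)^2)]
    · rw [intervalIntegral.integral_const]
      simp only [smul_eq_mul]
      ring_nf
    · intro x hx
      have hxδ : ¬ x ≤ δ := by push_neg; linarith [hx.1]
      rw [hφ x, if_neg hxδ, if_neg (not_le.2 hx.1), sq_abs]
      ring
  have hii1 : IntervalIntegrable (fun z => |φ z|^2) volume 0 δ := by
    apply myIntInt hδ0.le (g := fun _ => (0:ℝ))
    · intro x hx; rw [hφ x, if_pos hx.2]; simp
    · exact intervalIntegrable_const
  have hii2 : IntervalIntegrable (fun z => |φ z|^2) volume δ (1-ε) := by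
    apply myIntInt hδ1ε (g := fun z => (A*(1/z + 1/(1-z)))^2)
    · intro x hx
      rw [hφ x, if_neg (not_le.2 hx.1), if_pos hx.2, sq_abs]; ring
    · exact hint2
  have hii3 : IntervalIntegrable (fun z => |φ z|^2) volume (1-ε) 1 := by
    apply myIntInt h1ε1 (g := fun _ => ((A/ε)*L)^2)
    · intro x hx
      have hxδ : ¬ x ≤ δ := by push_neg; linarith [hx.1]
      rw [hφ x, if_neg hxδ, if_neg (not_le.2 hx.1), sq_abs]; ring
    · exact intervalIntegrable_const
  have hsplit : ∫ z in (0:ℝ)..1, |φ z|^2 =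
      (∫ z in (0:ℝ)..δ, |φ z|^2) + (∫ z in δ..(1-ε), |φ z|^2) + (∫ z in (1-ε)..1, |φ z|^2) := by
    rw [intervalIntegral.integral_add_adjacent_intervals hii1 hii2,
      intervalIntegral.integral_add_adjacent_intervals (hii1.trans hii2) hii3]
  have hS : ∫ z in (0:ℝ)..1, |φ z|^2 = A^2 * T := by
    rw [hsplit, hF1, hF2, hF3, hTdef]
    have he : (1:ℝ) - (1-ε) = ε := by ring
    rw [he, hLsum]
    field_simp
    ring
  -- bounds on T
  have hT1 : 1/δ ≤ T := by
    have h1 : (3:ℝ) ≤ 1/ε := by rw [le_div_iff₀ hε0]; linarith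
    have h2 : 1/(1-δ) ≤ 6/5 := by rw [div_le_div_iff₀ h1δ (by norm_num)]; linarith
    have h3 : 1/(1-ε) ≤ 3/2 := by rw [div_le_div_iff₀ h1ε (by norm_num)]; linarith
    have h4 : 0 ≤ L^2/ε := by positivity
    rw [hTdef]; linarith
  have hT5 : T ≤ 5/δ := by
    have h1 : 1/ε ≤ 1/(4*δ) := one_div_le_one_div_of_le (by linarith) hε4δ
    have h1' : 1/(4*δ) = (1/4) * (1/δ) := by ring
    have h2 : 0 ≤ 1/(1-δ) := by positivity
    have h3 : 0 ≤ 1/(1-ε) := by positivity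
    have h4 : 2*L ≤ 2*(1/δ) := by
      have := hLM.trans hM1δ; linarith
    have h5 : L^2/ε ≤ 1/δ := by
      have hM0 : (0:ℝ) < M := by linarith
      have hL2 : L^2 ≤ M^2 := by nlinarith
      have hb : L^2/ε ≤ M^2/ε := by
        exact (div_le_div_iff_of_pos_right hε0).2 hL2
      exact hb.trans (by rw [div_le_div_iff₀ hε0 hδ0]; nlinarith)
    have h6 : (5:ℝ)/δ = 5*(1/δ) := by ring
    rw [hTdef, h6]; linarith
  -- A^2
  have hA2 : A^2 = 27/80 * δ^3 := by
    have h15 : (Real.sqrt 15)^2 = 15 := Real.sq_sqrt (by norm_num)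
    have hd : (δ ^ ((3:ℝ)/2))^2 = δ^3 := by
      rw [← Real.rpow_natCast (δ ^ ((3:ℝ)/2)) 2, ← Real.rpow_mul hδ0.le,
        ← Real.rpow_natCast δ 3]
      norm_num
    have : A^2 = (3*Real.sqrt 15/20)^2 * (δ ^ ((3:ℝ)/2))^2 := by rw [hA, mul_pow]
    rw [this, hd, div_pow, mul_pow, h15]
    norm_num
  have hApos : 0 < A^2 := by rw [hA2]; positivity
  have hSpos : 0 ≤ A^2 * T := by
    have : 0 < T := lt_of_lt_of_le (by positivity) hT1
    positivity
  -- final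
  have hβ' : β = 2 * Real.sqrt 3 * Real.sqrt (A^2 * T) := by
    rw [hβ, hS, ← Real.sqrt_eq_rpow]
  have hβ0 : 0 ≤ β := by rw [hβ']; positivity
  have hβsq : β^2 = 12 * (A^2 * T) := by
    rw [hβ', mul_pow, mul_pow, Real.sq_sqrt (by norm_num : (0:ℝ) ≤ 3),
      Real.sq_sqrt hSpos]
    ring
  have hδT : 1 ≤ δ * T := by
    have := (div_le_iff₀ hδ0).mp hT1; linarith
  have hδT5 : δ * T ≤ 5 := by
    have := (le_div_iff₀ hδ0).mp hT5; linarith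
  constructor
  · have hlsq : (9 / (2 * Real.sqrt 5) * δ)^2 ≤ β^2 := by
      have h5 : (Real.sqrt 5)^2 = 5 := Real.sq_sqrt (by norm_num)
      have : (9 / (2 * Real.sqrt 5) * δ)^2 = 81/20 * δ^2 := by
        rw [mul_pow, div_pow, mul_pow, h5]; norm_num
      rw [this, hβsq, hA2]
      calc 81/20*δ^2 = 81/20*δ^2 * 1 := by ring
        _ ≤ 81/20*δ^2 * (δ*T) :=
            mul_le_mul_of_nonneg_left hδT (by positivity)
        _ = 12*(27/80*δ^3*T) := by ring
    have h0 : 0 ≤ 9 / (2 * Real.sqrt 5) * δ := by positivity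
    calc 9 / (2 * Real.sqrt 5) * δ = Real.sqrt ((9 / (2 * Real.sqrt 5) * δ)^2) :=
          (Real.sqrt_sq h0).symm
      _ ≤ Real.sqrt (β^2) := Real.sqrt_le_sqrt hlsq
      _ = β := Real.sqrt_sq hβ0
  · have husq : β^2 ≤ (9/2 * δ)^2 := by
      have : (9/2 * δ : ℝ)^2 = 81/4 * δ^2 := by ring
      rw [this, hβsq, hA2]
      calc 12*(27/80*δ^3*T) = 81/20*δ^2 * (δ*T) := by ring
        _ ≤ 81/20*δ^2 * 5 :=
            mul_le_mul_of_nonneg_left hδT5 (by positivity)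
        _ = 81/4 * δ^2 := by ring
    have h0 : 0 ≤ 9/2 * δ := by positivity
    calc β = Real.sqrt (β^2) := (Real.sqrt_sq hβ0).symm
      _ ≤ Real.sqrt ((9/2 * δ)^2) := Real.sqrt_le_sqrt husq
      _ = 9/2 * δ := Real.sqrt_sq h0
end

section
/- Let α ∈ (1/2, 1), ε ∈ (0, 1/3], δ ∈ (0, (1/3)(1/2)^{1/(2α-1)}], with (2α-1) δ^{2α-1} B(ε,δ,α)² ≤ ε. Set A = (2√3/9)√(2α-1) δ^{α+3/2} and β = √3 (∫_0^1 |ψ'(z) - λ(z)|² dz)^{1/2}, where ψ' - λ equals 0 on (0,δ), -A(z^{-α} + (1-z)^{-1}) on (δ, 1-ε), and -(A/ε)B on (1-ε, 1). Then (√2/3) δ² ≤ β ≤ (4/3) δ². -/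
open MeasureTheory Real

set_option maxHeartbeats 2000000

theorem stmt12 (α ε δ A β B : ℝ) (φ : ℝ → ℝ)
    (hα : α ∈ Set.Ioo (1/2 : ℝ) 1)
    (hε : ε ∈ Set.Ioc (0:ℝ) (1/3))
    (hδ0 : 0 < δ) (hδ : δ ≤ (1/3) * ((1:ℝ)/2) ^ (1/(2*α - 1)))
    (hB : B = ((1 - ε) ^ (1 - α) - δ ^ (1 - α)) / (1 - α) + Real.log ((1 - δ)/ε))
    (hεB : (2*α - 1) * δ ^ (2*α - 1) * B^2 ≤ ε)
    (hA : A = (2 * Real.sqrt 3 / 9) * Real.sqrt (2*α - 1) * δ ^ (α + 3/2))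
    (hφ : ∀ z, φ z = if z ≤ δ then 0
          else if z ≤ 1 - ε then -A * (z ^ (-α) + (1-z)⁻¹)
          else -(A/ε) * B)
    (hβ : β = Real.sqrt 3 * (∫ z in (0:ℝ)..1, |φ z|^2) ^ ((1:ℝ)/2)) :
    (Real.sqrt 2 / 3) * δ^2 ≤ β ∧ β ≤ (4/3) * δ^2 := by
  obtain ⟨hα1, hα2⟩ := hα
  obtain ⟨hε0, hε3⟩ := hε
  have ht0 : (0:ℝ) < 2*α - 1 := by linarith
  have ht1 : 2*α - 1 ≤ 1 := by linarith
  have htne : (1:ℝ) - 2*α ≠ 0 := by intro h; linarith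
  -- δ ≤ 1/6
  have hhalf : ((1:ℝ)/2) ^ (1/(2*α-1)) ≤ 1/2 := by
    have h1 : (1:ℝ) ≤ 1/(2*α-1) := by
      rw [le_div_iff₀ ht0]; linarith
    calc ((1:ℝ)/2) ^ (1/(2*α-1)) ≤ ((1:ℝ)/2) ^ (1:ℝ) :=
          Real.rpow_le_rpow_of_exponent_ge (by norm_num) (by norm_num) h1
      _ = 1/2 := Real.rpow_one _
  have hδ6 : δ ≤ 1/6 := by nlinarith
  have hb23 : (2:ℝ)/3 ≤ 1 - ε := by linarith
  have hb1 : 1 - ε < 1 := by linarith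
  have hδb : δ < 1 - ε := by linarith
  have hδ1 : δ < 1 := by linarith
  -- δ^(2α-1) ≤ (1/3)^(2α-1) / 2
  have hδt : δ ^ (2*α-1) ≤ (1/3:ℝ) ^ (2*α-1) * (1/2) := by
    have h1 : δ ^ (2*α-1) ≤ ((1/3) * ((1:ℝ)/2) ^ (1/(2*α-1))) ^ (2*α-1) :=
      Real.rpow_le_rpow hδ0.le hδ ht0.le
    have h2 : ((1/3) * ((1:ℝ)/2) ^ (1/(2*α-1))) ^ (2*α-1)
        = (1/3:ℝ) ^ (2*α-1) * (1/2) := by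
      rw [Real.mul_rpow (by norm_num) (Real.rpow_nonneg (by norm_num) _),
          ← Real.rpow_mul (by norm_num : (0:ℝ) ≤ 1/2),
          show 1/(2*α-1) * (2*α-1) = 1 by field_simp, Real.rpow_one]
    rw [h2] at h1; exact h1
  -- product bound δ^(2α-1) * (1-ε)^(1-2α) ≤ 1/2
  have hK : δ ^ (2*α-1) * (1-ε) ^ (1-2*α) ≤ 1/2 := by
    have h3 : (1-ε) ^ (1-2*α) ≤ ((2:ℝ)/3) ^ (1-2*α) :=
      Real.rpow_le_rpow_of_nonpos (by norm_num) hb23 (by linarith)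
    have h4 : ((2:ℝ)/3) ^ (1-2*α) = ((3:ℝ)/2) ^ (2*α-1) := by
      rw [show (1-2*α) = -(2*α-1) by ring, Real.rpow_neg (by norm_num),
          ← Real.inv_rpow (by norm_num)]
      norm_num
    have h5 : (1/3:ℝ) ^ (2*α-1) * ((3:ℝ)/2) ^ (2*α-1) = ((1:ℝ)/2) ^ (2*α-1) := by
      rw [← Real.mul_rpow (by norm_num) (by norm_num)]; norm_num
    have h6 : ((1:ℝ)/2) ^ (2*α-1) ≤ 1 :=
      Real.rpow_le_one (by norm_num) (by norm_num) ht0.le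
    have hp1 : (0:ℝ) ≤ δ ^ (2*α-1) := Real.rpow_nonneg hδ0.le _
    have hp2 : (0:ℝ) ≤ ((3:ℝ)/2) ^ (2*α-1) := Real.rpow_nonneg (by norm_num) _
    calc δ ^ (2*α-1) * (1-ε) ^ (1-2*α)
        ≤ δ ^ (2*α-1) * ((3:ℝ)/2) ^ (2*α-1) := by
          rw [h4] at h3; exact mul_le_mul_of_nonneg_left h3 hp1
      _ ≤ ((1/3:ℝ) ^ (2*α-1) * (1/2)) * ((3:ℝ)/2) ^ (2*α-1) :=
          mul_le_mul_of_nonneg_right hδt hp2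
      _ = ((1/3:ℝ) ^ (2*α-1) * ((3:ℝ)/2) ^ (2*α-1)) * (1/2) := by ring
      _ = ((1:ℝ)/2) ^ (2*α-1) * (1/2) := by rw [h5]
      _ ≤ 1/2 := by linarith
  -- piecewise descriptions
  set g : ℝ → ℝ := fun z => A^2 * (z ^ (-α) + (1-z)⁻¹)^2 with hgdef
  have hfg : Set.EqOn g (fun z => |φ z|^2) (Set.Ioc δ (1-ε)) := by
    intro z hz
    simp only [hgdef, hφ z, if_neg (not_le.mpr hz.1), if_pos hz.2]
    rw [sq_abs]; ring
  have hf0 : Set.EqOn (fun _ : ℝ => (0:ℝ)) (fun z => |φ z|^2) (Set.Ioc 0 δ) := by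
    intro z hz; simp [hφ z, hz.2]
  have hfc : Set.EqOn (fun _ : ℝ => (A/ε*B)^2) (fun z => |φ z|^2) (Set.Ioc (1-ε) 1) := by
    intro z hz
    have h1 : ¬ z ≤ δ := by push_neg; linarith [hz.1]
    have h2 : ¬ z ≤ 1-ε := not_le.mpr hz.1
    simp only [hφ z, if_neg h1, if_neg h2]
    rw [sq_abs]; ring
  -- continuity and integrability
  have hgc : ContinuousOn g (Set.Icc δ (1-ε)) := by
    apply ContinuousOn.mul continuousOn_const
    apply ContinuousOn.pow
    apply ContinuousOn.add
    · exact continuousOn_id.rpow_const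
        (fun x hx => Or.inl (ne_of_gt (lt_of_lt_of_le hδ0 hx.1)))
    · exact (continuousOn_const.sub continuousOn_id).inv₀
        (fun x hx => ne_of_gt (by linarith [hx.2] : (0:ℝ) < 1 - x))
  have hgi : IntervalIntegrable g volume δ (1-ε) := hgc.intervalIntegrable_of_Icc hδb.le
  have hfi2 : IntervalIntegrable (fun z => |φ z|^2) volume δ (1-ε) := by
    rw [intervalIntegrable_iff_integrableOn_Ioc_of_le hδb.le]
    exact ((intervalIntegrable_iff_integrableOn_Ioc_of_le hδb.le).mp hgi).congr_fun hfg
      measurableSet_Ioc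
  have hfi1 : IntervalIntegrable (fun z => |φ z|^2) volume 0 δ := by
    rw [intervalIntegrable_iff_integrableOn_Ioc_of_le hδ0.le]
    exact (integrableOn_const measure_Ioc_lt_top.ne).congr_fun hf0 measurableSet_Ioc
  have hfi3 : IntervalIntegrable (fun z => |φ z|^2) volume (1-ε) 1 := by
    rw [intervalIntegrable_iff_integrableOn_Ioc_of_le hb1.le]
    exact (integrableOn_const measure_Ioc_lt_top.ne).congr_fun hfc measurableSet_Ioc
  -- values on pieces
  have hJ1 : ∫ z in (0:ℝ)..δ, |φ z|^2 = 0 := by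
    rw [intervalIntegral.integral_of_le hδ0.le,
        ← setIntegral_congr_fun measurableSet_Ioc hf0]
    simp
  have hJ2 : ∫ z in δ..(1-ε), |φ z|^2 = ∫ z in δ..(1-ε), g z := by
    rw [intervalIntegral.integral_of_le hδb.le, intervalIntegral.integral_of_le hδb.le]
    exact (setIntegral_congr_fun measurableSet_Ioc hfg).symm
  have hJ3 : ∫ z in (1-ε)..1, |φ z|^2 = ε * (A/ε*B)^2 := by
    rw [intervalIntegral.integral_of_le hb1.le,
        ← setIntegral_congr_fun measurableSet_Ioc hfc, setIntegral_const, smul_eq_mul,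
        Real.volume_real_Ioc_of_le hb1.le]
    ring
  have hsplit : ∫ z in (0:ℝ)..1, |φ z|^2
      = (∫ z in δ..(1-ε), g z) + ε * (A/ε*B)^2 := by
    rw [← intervalIntegral.integral_add_adjacent_intervals (hfi1.trans hfi2) hfi3,
        ← intervalIntegral.integral_add_adjacent_intervals hfi1 hfi2, hJ1, hJ2, hJ3]
    ring
  -- exact integrals
  have hI1 : ∫ z in δ..(1-ε), z ^ (-(2*α)) =
      ((1-ε) ^ (1-2*α) - δ ^ (1-2*α)) / (1-2*α) := by
    rw [integral_rpow (Or.inr ⟨by intro h; rw [neg_eq_iff_eq_neg] at h; nlinarith,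
        Set.notMem_uIcc_of_lt hδ0 (by linarith)⟩)]
    rw [show -(2*α)+1 = 1-2*α by ring]
  have hFint : ∫ z in δ..(1-ε), z ^ (-α) =
      ((1-ε) ^ (1-α) - δ ^ (1-α)) / (1-α) := by
    rw [integral_rpow (Or.inl (by linarith))]
    rw [show -α+1 = 1-α by ring]
  have hI2 : ∫ z in δ..(1-ε), ((1-z)⁻¹)^2 = ε⁻¹ - (1-δ)⁻¹ := by
    have hc := intervalIntegral.integral_comp_sub_left (a := δ) (b := 1-ε)
      (fun u => (u⁻¹)^2) 1
    simp only [show (1:ℝ) - (1-ε) = ε by ring] at hc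
    rw [hc]
    have h2 : ∀ u : ℝ, (u⁻¹)^2 = u ^ (-2 : ℤ) := by
      intro u
      rw [zpow_neg, inv_pow]
      norm_cast
    simp_rw [h2]
    rw [integral_zpow (Or.inr ⟨by decide,
        Set.notMem_uIcc_of_lt hε0 (by linarith)⟩)]
    norm_num
    ring
  -- integrabilities of comparison functions
  have hki : IntervalIntegrable (fun z => z ^ (-(2*α))) volume δ (1-ε) := by
    apply ContinuousOn.intervalIntegrable_of_Icc hδb.le
    exact continuousOn_id.rpow_const
      (fun x hx => Or.inl (ne_of_gt (lt_of_lt_of_le hδ0 hx.1)))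
  have hpi : IntervalIntegrable (fun z => z ^ (-α)) volume δ (1-ε) := by
    apply ContinuousOn.intervalIntegrable_of_Icc hδb.le
    exact continuousOn_id.rpow_const
      (fun x hx => Or.inl (ne_of_gt (lt_of_lt_of_le hδ0 hx.1)))
  have hqi : IntervalIntegrable (fun z => ((1-z)⁻¹)^2) volume δ (1-ε) := by
    apply ContinuousOn.intervalIntegrable_of_Icc hδb.le
    exact ((continuousOn_const.sub continuousOn_id).inv₀
      (fun x hx => ne_of_gt (by linarith [hx.2] : (0:ℝ) < 1 - x))).pow 2
  -- pointwise conversion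
  have hconv : ∀ z ∈ Set.Icc δ (1-ε), (z ^ (-α))^2 = z ^ (-(2*α)) := by
    intro z hz
    have hz0 : (0:ℝ) < z := lt_of_lt_of_le hδ0 hz.1
    rw [← Real.rpow_natCast (z ^ (-α)) 2, ← Real.rpow_mul hz0.le,
        show -α * ((2:ℕ):ℝ) = -(2*α) by push_cast; ring]
  -- lower bound for middle integral
  have hmono1 : ∫ z in δ..(1-ε), A^2 * z ^ (-(2*α)) ≤ ∫ z in δ..(1-ε), g z := by
    apply intervalIntegral.integral_mono_on hδb.le (hki.const_mul _) hgi
    intro z hz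
    have hz0 : (0:ℝ) < z := lt_of_lt_of_le hδ0 hz.1
    have hq : (0:ℝ) ≤ (1-z)⁻¹ := by
      have : (0:ℝ) < 1 - z := by linarith [hz.2]
      positivity
    have hp : (0:ℝ) ≤ z ^ (-α) := Real.rpow_nonneg hz0.le _
    have hc := hconv z hz
    show A ^ 2 * z ^ (-(2*α)) ≤ A ^ 2 * (z ^ (-α) + (1-z)⁻¹) ^ 2
    rw [← hc]
    nlinarith [sq_nonneg A, mul_nonneg (mul_nonneg (sq_nonneg A) hp) hq,
      mul_nonneg (sq_nonneg A) (sq_nonneg ((1-z)⁻¹))]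
  -- upper bound for middle integral
  have hmono2 : ∫ z in δ..(1-ε), g z
      ≤ ∫ z in δ..(1-ε), A^2 * (2 * z ^ (-(2*α)) + 2 * ((1-z)⁻¹)^2) := by
    have hui : IntervalIntegrable
        (fun z => A^2 * (2 * z ^ (-(2*α)) + 2 * ((1-z)⁻¹)^2)) volume δ (1-ε) := by
      apply ContinuousOn.intervalIntegrable_of_Icc hδb.le
      apply ContinuousOn.mul continuousOn_const
      apply ContinuousOn.add
      · exact continuousOn_const.mul (continuousOn_id.rpow_const
          (fun x hx => Or.inl (ne_of_gt (lt_of_lt_of_le hδ0 hx.1))))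
      · exact continuousOn_const.mul (((continuousOn_const.sub continuousOn_id).inv₀
          (fun x hx => ne_of_gt (by linarith [hx.2] : (0:ℝ) < 1 - x))).pow 2)
    apply intervalIntegral.integral_mono_on hδb.le hgi hui
    intro z hz
    have hz0 : (0:ℝ) < z := lt_of_lt_of_le hδ0 hz.1
    have hc := hconv z hz
    show A ^ 2 * (z ^ (-α) + (1-z)⁻¹) ^ 2 ≤ A ^ 2 * (2 * z ^ (-(2*α)) + 2 * ((1-z)⁻¹)^2)
    rw [← hc]
    nlinarith [sq_nonneg A, mul_nonneg (sq_nonneg A) (sq_nonneg (z ^ (-α) - (1-z)⁻¹))]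
  have hupval : ∫ z in δ..(1-ε), A^2 * (2 * z ^ (-(2*α)) + 2 * ((1-z)⁻¹)^2)
      = A^2 * (2*(((1-ε) ^ (1-2*α) - δ ^ (1-2*α)) / (1-2*α)) + 2*(ε⁻¹ - (1-δ)⁻¹)) := by
    rw [intervalIntegral.integral_const_mul,
        intervalIntegral.integral_add (hki.const_mul 2) (hqi.const_mul 2),
        intervalIntegral.integral_const_mul, intervalIntegral.integral_const_mul, hI1, hI2]
  have hlowval : ∫ z in δ..(1-ε), A^2 * z ^ (-(2*α))
      = A^2 * (((1-ε) ^ (1-2*α) - δ ^ (1-2*α)) / (1-2*α)) := by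
    rw [intervalIntegral.integral_const_mul, hI1]
  -- A^2 value
  have hA2 : A^2 = 4/27 * (2*α-1) * δ ^ (2*α+3) := by
    have h1 : (δ ^ (α+3/2))^2 = δ ^ (2*α+3) := by
      rw [← Real.rpow_natCast (δ ^ (α+3/2)) 2, ← Real.rpow_mul hδ0.le,
          show (α+3/2) * ((2:ℕ):ℝ) = 2*α+3 by push_cast; ring]
    have h2 : Real.sqrt 3 ^ 2 = 3 := Real.sq_sqrt (by norm_num)
    have h3 : Real.sqrt (2*α-1) ^ 2 = 2*α-1 := Real.sq_sqrt ht0.le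
    rw [hA, mul_pow, mul_pow, div_pow, mul_pow, h1, h2, h3]
    norm_num
  -- rpow identities
  have hδ4 : δ ^ (2*α+3) * δ ^ (1-2*α) = δ^4 := by
    rw [← Real.rpow_add hδ0, show 2*α+3+(1-2*α) = ((4:ℕ):ℝ) by push_cast; ring,
        Real.rpow_natCast]
  have hδsplit : δ ^ (2*α+3) = δ^4 * δ ^ (2*α-1) := by
    rw [← Real.rpow_natCast δ 4, ← Real.rpow_add hδ0,
        show ((4:ℕ):ℝ)+(2*α-1) = 2*α+3 by push_cast; ring]
  have hδtt : δ ^ (2*α-1) * δ ^ (1-2*α) = 1 := by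
    rw [← Real.rpow_add hδ0, show 2*α-1+(1-2*α) = (0:ℝ) by ring, Real.rpow_zero]
  have hbge1 : (1:ℝ) ≤ (1-ε) ^ (1-2*α) :=
    Real.one_le_rpow_of_pos_of_le_one_of_nonpos (by linarith) (by linarith) (by linarith)
  have hX0 : (0:ℝ) ≤ δ ^ (2*α-1) := Real.rpow_nonneg hδ0.le _
  have hu0 : (0:ℝ) ≤ (2*α-1) * δ ^ (2*α-1) := mul_nonneg ht0.le hX0
  -- u ≤ X
  have hu1 : (2*α-1) * δ ^ (2*α-1) ≤ δ ^ (2*α-1) := by nlinarith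
  -- 3^t ≥ 1 + t
  have h3t : (1:ℝ) + (2*α-1) ≤ (3:ℝ) ^ (2*α-1) := by
    have hlog3 : (1:ℝ) ≤ Real.log 3 := by
      rw [Real.le_log_iff_exp_le (by norm_num)]
      exact le_trans Real.exp_one_lt_d9.le (by norm_num)
    have h1 : (2*α-1) * Real.log 3 + 1 ≤ Real.exp ((2*α-1) * Real.log 3) :=
      Real.add_one_le_exp _
    rw [Real.rpow_def_of_pos (by norm_num : (0:ℝ) < 3), mul_comm (Real.log 3)]
    nlinarith
  -- 3^t * δ^t ≤ 1/2
  have h3δ : (3:ℝ) ^ (2*α-1) * δ ^ (2*α-1) ≤ 1/2 := by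
    have h1 : (3:ℝ) ^ (2*α-1) * δ ^ (2*α-1)
        ≤ (3:ℝ) ^ (2*α-1) * ((1/3:ℝ) ^ (2*α-1) * (1/2)) :=
      mul_le_mul_of_nonneg_left hδt (Real.rpow_nonneg (by norm_num) _)
    have h2 : (3:ℝ) ^ (2*α-1) * (1/3:ℝ) ^ (2*α-1) = 1 := by
      rw [← Real.mul_rpow (by norm_num) (by norm_num)]
      norm_num
    nlinarith
  -- u ≤ 1/2 - X
  have hu2 : (2*α-1) * δ ^ (2*α-1) ≤ 1/2 - δ ^ (2*α-1) := by nlinarith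
  -- B ≥ 1/2 + log term;  F ≥ 1/2
  have hFge : (1:ℝ)/2 ≤ ((1-ε) ^ (1-α) - δ ^ (1-α)) / (1-α) := by
    rw [← hFint]
    have h1 : ∫ z in δ..(1-ε), (1:ℝ) = (1-ε) - δ := by simp
    calc (1:ℝ)/2 ≤ (1-ε) - δ := by linarith
      _ = ∫ z in δ..(1-ε), (1:ℝ) := h1.symm
      _ ≤ ∫ z in δ..(1-ε), z ^ (-α) := by
          apply intervalIntegral.integral_mono_on hδb.le intervalIntegrable_const hpi
          intro z hz
          exact Real.one_le_rpow_of_pos_of_le_one_of_nonpos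
            (lt_of_lt_of_le hδ0 hz.1) (by linarith [hz.2]) (by linarith)
  -- flip the division
  have hflip : (((1-ε) ^ (1-2*α) - δ ^ (1-2*α)) / (1-2*α))
      = ((δ ^ (1-2*α) - (1-ε) ^ (1-2*α)) / (2*α-1)) := by
    rw [div_eq_div_iff htne (ne_of_gt ht0)]
    ring
  have e1 : A^2 * ((δ ^ (1-2*α) - (1-ε) ^ (1-2*α)) / (2*α-1))
      = 4/27 * (δ ^ (2*α+3) * δ ^ (1-2*α) - δ ^ (2*α+3) * (1-ε) ^ (1-2*α)) := by
    rw [hA2]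
    field_simp
  rw [hδ4, hδsplit] at e1
  -- lower bound for the total integral
  have hmono1' := hmono1
  rw [hlowval] at hmono1'
  have hIlow : 2/27*δ^4 ≤ ∫ z in (0:ℝ)..1, |φ z|^2 := by
    rw [hsplit]
    have hc0 : (0:ℝ) ≤ ε * (A/ε*B)^2 := by positivity
    have hstep : 2/27*δ^4 ≤ A^2 * (((1-ε) ^ (1-2*α) - δ ^ (1-2*α)) / (1-2*α)) := by
      rw [hflip, e1]
      linarith only [mul_le_mul_of_nonneg_left hK (show (0:ℝ) ≤ 4/27*δ^4 by positivity)]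
    linarith only [hstep, hmono1', hc0]
  -- upper bound pieces
  have hmono2' := hmono2
  rw [hupval] at hmono2'
  have hb1 : (2*α-1) * δ ^ (2*α-1) * (2*((δ ^ (1-2*α) - (1-ε) ^ (1-2*α)) / (2*α-1)))
      = 2*(δ ^ (2*α-1) * δ ^ (1-2*α)) - 2*(δ ^ (2*α-1) * (1-ε) ^ (1-2*α)) := by
    field_simp
  rw [hδtt] at hb1
  have hinv1δ : (1:ℝ) ≤ (1-δ)⁻¹ := by
    rw [le_inv_comm₀ (by norm_num) (by linarith)]
    linarith
  have hb3 : (2*α-1) * δ ^ (2*α-1) * (B^2*ε⁻¹) ≤ 1 := by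
    have h := mul_le_mul_of_nonneg_right hεB (inv_nonneg.mpr hε0.le)
    rw [mul_inv_cancel₀ (ne_of_gt hε0)] at h
    calc (2*α-1) * δ ^ (2*α-1) * (B^2*ε⁻¹)
        = (2*α-1) * δ ^ (2*α-1) * B^2 * ε⁻¹ := by ring
      _ ≤ 1 := h
  have h2uε : 2*((2*α-1) * δ ^ (2*α-1) * ε⁻¹)
      ≤ 1 + 2*δ ^ (2*α-1) + 2*((2*α-1) * δ ^ (2*α-1)) := by
    rcases le_or_gt (1/4:ℝ) ε with hε4 | hε4
    · have hinv : ε⁻¹ ≤ 4 := by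
        rw [show (4:ℝ) = ((1:ℝ)/4)⁻¹ by norm_num]
        exact inv_anti₀ (by norm_num) hε4
      have h8 := mul_le_mul_of_nonneg_left hinv hu0
      linarith only [h8, hu1, hu2]
    · have hL1 : (1:ℝ) ≤ Real.log ((1-δ)/ε) := by
        rw [Real.le_log_iff_exp_le (div_pos (by linarith) hε0)]
        have h10 : Real.exp 1 * ε ≤ 1 - δ := by
          have hp := mul_le_mul Real.exp_one_lt_d9.le hε4.le hε0.le
            (by norm_num : (0:ℝ) ≤ 2.7182818286)
          linarith only [hp, hδ6]
        rw [le_div_iff₀ hε0]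
        linarith
      have hB32 : (3:ℝ)/2 ≤ B := by rw [hB]; linarith [hFge]
      have hB2 : (9:ℝ)/4 ≤ B^2 := by nlinarith only [hB32]
      have hu49 : (2*α-1) * δ ^ (2*α-1) ≤ 4/9*ε := by
        linarith only [mul_le_mul_of_nonneg_left hB2 hu0, hεB]
      have huε : (2*α-1) * δ ^ (2*α-1) * ε⁻¹ ≤ 4/9 := by
        rw [← div_eq_mul_inv, div_le_iff₀ hε0]
        linarith only [hu49]
      linarith only [huε, hu0, hX0]
  have hb2 : (2*α-1) * δ ^ (2*α-1) * (2*(ε⁻¹ - (1-δ)⁻¹))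
      ≤ 2*((2*α-1) * δ ^ (2*α-1) * ε⁻¹) - 2*((2*α-1) * δ ^ (2*α-1)) := by
    linarith only [mul_le_mul_of_nonneg_left hinv1δ hu0]
  have hXY : δ ^ (2*α-1) ≤ δ ^ (2*α-1) * (1-ε) ^ (1-2*α) := by
    linarith only [mul_le_mul_of_nonneg_left hbge1 hX0]
  have hQ : (2*α-1) * δ ^ (2*α-1) *
        (2*(((1-ε) ^ (1-2*α) - δ ^ (1-2*α)) / (1-2*α)) + 2*(ε⁻¹ - (1-δ)⁻¹))
      + (2*α-1) * δ ^ (2*α-1) * (B^2*ε⁻¹) ≤ 4 := by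
    rw [hflip]
    have hsplit2 : (2*α-1) * δ ^ (2*α-1) *
        (2*((δ ^ (1-2*α) - (1-ε) ^ (1-2*α)) / (2*α-1)) + 2*(ε⁻¹ - (1-δ)⁻¹))
        = (2*α-1) * δ ^ (2*α-1) * (2*((δ ^ (1-2*α) - (1-ε) ^ (1-2*α)) / (2*α-1)))
        + (2*α-1) * δ ^ (2*α-1) * (2*(ε⁻¹ - (1-δ)⁻¹)) := by ring
    rw [hsplit2, hb1]
    linarith only [hb2, hb3, h2uε, hXY]
  have hA24 : A^2 = 4/27*((2*α-1)*(δ^4 * δ ^ (2*α-1))) := by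
    rw [hA2, hδsplit]; ring
  have e2 : ε * (A/ε*B)^2 = A^2 * B^2 * ε⁻¹ := by
    field_simp
  have hIup : ∫ z in (0:ℝ)..1, |φ z|^2 ≤ 16/27*δ^4 := by
    rw [hsplit, e2]
    have hmul := mul_le_mul_of_nonneg_left hQ (show (0:ℝ) ≤ 4/27*δ^4 by positivity)
    have hfin : A^2 * (2*(((1-ε) ^ (1-2*α) - δ ^ (1-2*α)) / (1-2*α)) + 2*(ε⁻¹ - (1-δ)⁻¹))
        + A^2 * B^2 * ε⁻¹ ≤ 16/27*δ^4 := by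
      calc A^2 * (2*(((1-ε) ^ (1-2*α) - δ ^ (1-2*α)) / (1-2*α)) + 2*(ε⁻¹ - (1-δ)⁻¹))
            + A^2 * B^2 * ε⁻¹
          = 4/27*δ^4 * ((2*α-1) * δ ^ (2*α-1) *
              (2*(((1-ε) ^ (1-2*α) - δ ^ (1-2*α)) / (1-2*α)) + 2*(ε⁻¹ - (1-δ)⁻¹))
            + (2*α-1) * δ ^ (2*α-1) * (B^2*ε⁻¹)) := by rw [hA24]; ring
        _ ≤ 4/27*δ^4 * 4 := hmul
        _ = 16/27*δ^4 := by ring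
    linarith only [hmono2', hfin]
  -- conclude
  have hβ' : β = Real.sqrt (3 * ∫ z in (0:ℝ)..1, |φ z|^2) := by
    rw [hβ, Real.sqrt_mul (by norm_num : (0:ℝ) ≤ 3), ← Real.sqrt_eq_rpow]
  have h2s : Real.sqrt 2 ^ 2 = 2 := Real.sq_sqrt (by norm_num)
  have hδ4nn : (0:ℝ) ≤ δ^4 := by positivity
  have e3 : (Real.sqrt 2/3*δ^2)^2 = 2/9*δ^4 := by
    rw [mul_pow, div_pow, h2s]; ring
  have e4 : ((4:ℝ)/3*δ^2)^2 = 16/9*δ^4 := by ring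
  constructor
  · rw [hβ']
    have hg : Real.sqrt 2/3*δ^2 ≤ Real.sqrt ((Real.sqrt 2/3*δ^2)^2) :=
      (Real.sqrt_sq (by positivity)).symm.le
    refine hg.trans (Real.sqrt_le_sqrt ?_)
    linarith only [hIlow, e3]
  · rw [hβ']
    calc Real.sqrt (3 * ∫ z in (0:ℝ)..1, |φ z|^2)
        ≤ Real.sqrt ((4/3*δ^2)^2) := Real.sqrt_le_sqrt (by linarith only [hIup, e4])
      _ = 4/3*δ^2 := Real.sqrt_sq (by positivity)
end
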